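/- Let U ⊆ ℝⁿ × ℝᵐ be open and let Ψ : U → ℝⁿ × ℝᵐ be differentiable with Φ(Ψ(x)) = x for all x ∈ U (so Ψ inverts the change of variables (e, β) ↦ (d*, β); the second component of Ψ(d, β) is necessarily β). Then for every (d, β) ∈ U, writing e = Ψ₁(d, β) for the first component of Ψ(d, β), the transformed Hamiltonian H̄ = H ∘ Ψ satisfies ∇_d H̄(d, β) = e/4π and ∇_β H̄(d, β) = (1/4π) M̃⁻¹ β + ∇_β K(e, β). That is, the gradients of the discrete Hamiltonian with respect to the bracket variables are e/4π and h̃/4π, where h̃ = M̃⁻¹β + 4π ∇_β K. -/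

import Mathlib

open ContinuousLinearMap



/-- Partial gradient `∇_e K(e, β)` of `K : ℝⁿ × ℝᵐ → ℝ` in the first variable. -/
noncomputable def gradE {n m : ℕ} (K : (Fin n → ℝ) → (Fin m → ℝ) → ℝ)
    (e : Fin n → ℝ) (β : Fin m → ℝ) : Fin n → ℝ :=
  fun i => fderiv ℝ (fun e' => K e' β) e (Pi.single i 1)

/-- Partial gradient `∇_β K(e, β)` of `K : ℝⁿ × ℝᵐ → ℝ` in the second variable. -/
noncomputable def gradB {n m : ℕ} (K : (Fin n → ℝ) → (Fin m → ℝ) → ℝ)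
    (e : Fin n → ℝ) (β : Fin m → ℝ) : Fin m → ℝ :=
  fun j => fderiv ℝ (fun β' => K e β') β (Pi.single j 1)

/-- The discrete Hamiltonian
`H(e, β) = K(e, β) − eᵀ ∇_e K(e, β) + (1/8π)(eᵀ M e + βᵀ M̃⁻¹ β)`. -/
noncomputable def Hdisc {n m : ℕ} (K : (Fin n → ℝ) → (Fin m → ℝ) → ℝ)
    (M : Matrix (Fin n) (Fin n) ℝ) (Mt : Matrix (Fin m) (Fin m) ℝ)
    (e : Fin n → ℝ) (β : Fin m → ℝ) : ℝ :=
  K e β - ∑ i, e i * gradE K e β i +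
    (1 / (8 * Real.pi)) *
      ((∑ i, ∑ j, e i * M i j * e j) + ∑ i, ∑ j, β i * Mt⁻¹ i j * β j)

/-- The change of variables `Φ(e, β) = (M e − 4π ∇_e K(e, β), β)` (the discrete
constitutive relation of the macroscopic Maxwell equations). -/
noncomputable def Phidisc {n m : ℕ} (K : (Fin n → ℝ) → (Fin m → ℝ) → ℝ)
    (M : Matrix (Fin n) (Fin n) ℝ) :
    (Fin n → ℝ) × (Fin m → ℝ) → (Fin n → ℝ) × (Fin m → ℝ) :=
  fun p => (fun i => (∑ j, M i j * p.1 j) - 4 * Real.pi * gradE K p.1 p.2 i, p.2)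


lemma aux_single_smul {k : ℕ} (v : Fin k → ℝ) (i : Fin k) :
    v i • (Pi.single i 1 : Fin k → ℝ) = Pi.single i (v i) := by
  ext j
  rcases eq_or_ne j i with h | h <;> simp [Pi.single_apply, h]

lemma aux_clm_decomp {n m : ℕ} (L : ((Fin n → ℝ) × (Fin m → ℝ)) →L[ℝ] ℝ)
    (v : (Fin n → ℝ) × (Fin m → ℝ)) :
    L v = ∑ i, v.1 i * L (Pi.single i 1, 0) + ∑ j, v.2 j * L (0, Pi.single j 1) := by
  have hv : v = (∑ i, v.1 i • (((Pi.single i 1 : Fin n → ℝ), (0 : Fin m → ℝ)) :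
        (Fin n → ℝ) × (Fin m → ℝ)))
      + ∑ j, v.2 j • ((((0 : Fin n → ℝ), (Pi.single j 1 : Fin m → ℝ))) :
        (Fin n → ℝ) × (Fin m → ℝ)) := by
    refine Prod.ext ?_ ?_
    · simp [Prod.fst_sum, aux_single_smul, Finset.univ_sum_single]
    · simp [Prod.snd_sum, aux_single_smul, Finset.univ_sum_single]
  conv_lhs => rw [hv]
  rw [map_add, map_sum, map_sum]
  congr 1 <;> exact Finset.sum_congr rfl fun x _ => by rw [map_smul, smul_eq_mul]

lemma aux_gradE {n m : ℕ} (K : (Fin n → ℝ) → (Fin m → ℝ) → ℝ)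
    (p : (Fin n → ℝ) × (Fin m → ℝ))
    (hKd : DifferentiableAt ℝ (fun p : (Fin n → ℝ) × (Fin m → ℝ) => K p.1 p.2) p)
    (i : Fin n) :
    gradE K p.1 p.2 i
      = fderiv ℝ (fun p : (Fin n → ℝ) × (Fin m → ℝ) => K p.1 p.2) p (Pi.single i 1, 0) := by
  have h : HasFDerivAt (fun e' => K e' p.2)
      ((fderiv ℝ (fun p : (Fin n → ℝ) × (Fin m → ℝ) => K p.1 p.2) p).comp
        (inl ℝ (Fin n → ℝ) (Fin m → ℝ))) p.1 :=
    hKd.hasFDerivAt.comp (f := fun e' => (e', p.2)) p.1 (hasFDerivAt_prodMk_left p.1 p.2)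
  rw [gradE, h.fderiv]
  simp

lemma aux_gradB {n m : ℕ} (K : (Fin n → ℝ) → (Fin m → ℝ) → ℝ)
    (p : (Fin n → ℝ) × (Fin m → ℝ))
    (hKd : DifferentiableAt ℝ (fun p : (Fin n → ℝ) × (Fin m → ℝ) => K p.1 p.2) p)
    (j : Fin m) :
    gradB K p.1 p.2 j
      = fderiv ℝ (fun p : (Fin n → ℝ) × (Fin m → ℝ) => K p.1 p.2) p (0, Pi.single j 1) := by
  have h : HasFDerivAt (fun β' => K p.1 β')
      ((fderiv ℝ (fun p : (Fin n → ℝ) × (Fin m → ℝ) => K p.1 p.2) p).comp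
        (inr ℝ (Fin n → ℝ) (Fin m → ℝ))) p.2 :=
    hKd.hasFDerivAt.comp (f := fun β' => (p.1, β')) p.2 (hasFDerivAt_prodMk_right p.1 p.2)
  rw [gradB, h.fderiv]
  simp

lemma aux_hasFDerivAt_Hdisc {n m : ℕ} (K : (Fin n → ℝ) → (Fin m → ℝ) → ℝ)
    (hK : ContDiff ℝ 2 (fun p : (Fin n → ℝ) × (Fin m → ℝ) => K p.1 p.2))
    (M : Matrix (Fin n) (Fin n) ℝ) (Mt : Matrix (Fin m) (Fin m) ℝ)
    (p : (Fin n → ℝ) × (Fin m → ℝ)) :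
    ∃ L : ((Fin n → ℝ) × (Fin m → ℝ)) →L[ℝ] ℝ,
      HasFDerivAt (fun q : (Fin n → ℝ) × (Fin m → ℝ) => Hdisc K M Mt q.1 q.2) L p ∧
      ∀ v : (Fin n → ℝ) × (Fin m → ℝ), L v =
        fderiv ℝ (fun p : (Fin n → ℝ) × (Fin m → ℝ) => K p.1 p.2) p v
        - ∑ i, (v.1 i * fderiv ℝ (fun p : (Fin n → ℝ) × (Fin m → ℝ) => K p.1 p.2) p
                  (Pi.single i 1, 0)
              + p.1 i * fderiv ℝ (fderiv ℝ (fun p : (Fin n → ℝ) × (Fin m → ℝ) => K p.1 p.2)) p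
                  v (Pi.single i 1, 0))
        + (1 / (8 * Real.pi)) *
          ((∑ i, ∑ j, (v.1 i * M i j * p.1 j + p.1 i * M i j * v.1 j))
           + (∑ i, ∑ j, (v.2 i * Mt⁻¹ i j * p.2 j + p.2 i * Mt⁻¹ i j * v.2 j))) := by
  set F : ((Fin n → ℝ) × (Fin m → ℝ)) → ℝ := fun p => K p.1 p.2 with hFdef
  have hFd : Differentiable ℝ F := hK.differentiable (by norm_num)
  have hDF : ContDiff ℝ 1 (fderiv ℝ F) := hK.fderiv_right (by norm_num)
  have hD2 : HasFDerivAt (fderiv ℝ F) (fderiv ℝ (fderiv ℝ F) p) p :=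
    ((hDF.differentiable one_ne_zero) p).hasFDerivAt
  have hg : ∀ w : (Fin n → ℝ) × (Fin m → ℝ),
      HasFDerivAt (fun q => fderiv ℝ F q w)
        ((ContinuousLinearMap.apply ℝ ℝ w).comp (fderiv ℝ (fderiv ℝ F) p)) p :=
    fun w => (ContinuousLinearMap.apply ℝ ℝ w).hasFDerivAt.comp p hD2
  have hC1 : ∀ i : Fin n, HasFDerivAt (fun q : (Fin n → ℝ) × (Fin m → ℝ) => q.1 i)
      ((ContinuousLinearMap.proj i).comp (fst ℝ (Fin n → ℝ) (Fin m → ℝ))) p :=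
    fun i => ((ContinuousLinearMap.proj i (R := ℝ) (φ := fun _ : Fin n => ℝ)).comp
      (fst ℝ (Fin n → ℝ) (Fin m → ℝ))).hasFDerivAt
  have hC2 : ∀ j : Fin m, HasFDerivAt (fun q : (Fin n → ℝ) × (Fin m → ℝ) => q.2 j)
      ((ContinuousLinearMap.proj j).comp (snd ℝ (Fin n → ℝ) (Fin m → ℝ))) p :=
    fun j => ((ContinuousLinearMap.proj j (R := ℝ) (φ := fun _ : Fin m => ℝ)).comp
      (snd ℝ (Fin n → ℝ) (Fin m → ℝ))).hasFDerivAt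
  have hfun : (fun q : (Fin n → ℝ) × (Fin m → ℝ) => Hdisc K M Mt q.1 q.2)
      = fun q => F q - ∑ i, q.1 i * fderiv ℝ F q (Pi.single i 1, 0)
        + (1 / (8 * Real.pi)) *
          ((∑ i, ∑ j, q.1 i * M i j * q.1 j) + ∑ i, ∑ j, q.2 i * Mt⁻¹ i j * q.2 j) := by
    funext q
    simp only [Hdisc, aux_gradE K q (hFd q), hFdef]
  have hder := (((hFd p).hasFDerivAt.sub
      (HasFDerivAt.fun_sum (fun i (_ : i ∈ Finset.univ) => (hC1 i).mul (hg (Pi.single i 1, 0))))).add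
    (((HasFDerivAt.fun_sum (fun i (_ : i ∈ Finset.univ) =>
        HasFDerivAt.fun_sum (fun j (_ : j ∈ Finset.univ) =>
          ((hC1 i).mul_const (M i j)).mul (hC1 j)))).add
      (HasFDerivAt.fun_sum (fun i (_ : i ∈ Finset.univ) =>
        HasFDerivAt.fun_sum (fun j (_ : j ∈ Finset.univ) =>
          ((hC2 i).mul_const (Mt⁻¹ i j)).mul (hC2 j))))).const_mul (1 / (8 * Real.pi))))
  rw [hfun]
  refine ⟨_, hder, fun v => ?_⟩
  simp only [ContinuousLinearMap.add_apply, ContinuousLinearMap.coe_sub', Pi.sub_apply,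
    ContinuousLinearMap.coe_smul', Pi.smul_apply, ContinuousLinearMap.coe_sum', Finset.sum_apply,
    ContinuousLinearMap.coe_comp', Function.comp_apply, ContinuousLinearMap.apply_apply,
    ContinuousLinearMap.proj_apply, ContinuousLinearMap.coe_fst', ContinuousLinearMap.coe_snd',
    smul_eq_mul]
  congr 1
  · congr 1
    exact Finset.sum_congr rfl fun i _ => by ring
  · refine congrArg (fun t => 1 / (8 * Real.pi) * t) ?_
    congr 1
    · exact Finset.sum_congr rfl fun i _ => Finset.sum_congr rfl fun j _ => by ring
    · exact Finset.sum_congr rfl fun i _ => Finset.sum_congr rfl fun j _ => by ring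

lemma aux_sym_sum {n : ℕ} (M : Matrix (Fin n) (Fin n) ℝ) (hMsym : M.IsSymm)
    (V1 e : Fin n → ℝ) :
    (∑ a, ∑ b, (V1 a * M a b * e b + e a * M a b * V1 b))
      = ∑ a, 2 * (e a * ∑ b, M a b * V1 b) := by
  have h1 : ∑ a, ∑ b, V1 a * M a b * e b = ∑ a, ∑ b, e a * M a b * V1 b := by
    rw [Finset.sum_comm]
    exact Finset.sum_congr rfl fun a _ => Finset.sum_congr rfl fun b _ => by
      rw [hMsym.apply]; ring
  calc ∑ a, ∑ b, (V1 a * M a b * e b + e a * M a b * V1 b)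
      = (∑ a, ∑ b, V1 a * M a b * e b) + ∑ a, ∑ b, e a * M a b * V1 b := by
        rw [← Finset.sum_add_distrib]
        exact Finset.sum_congr rfl fun a _ => Finset.sum_add_distrib
    _ = ∑ a, 2 * (e a * ∑ b, M a b * V1 b) := by
        rw [h1, ← Finset.sum_add_distrib]
        refine Finset.sum_congr rfl fun a _ => ?_
        rw [Finset.mul_sum, Finset.mul_sum, ← Finset.sum_add_distrib]
        exact Finset.sum_congr rfl fun b _ => by ring

lemma aux_alg1 {n m : ℕ} (T : ℝ) (e u V1 D g : Fin n → ℝ) (V2 : Fin m → ℝ)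
    (hV2 : V2 = 0)
    (M : Matrix (Fin n) (Fin n) ℝ) (hMsym : M.IsSymm)
    (A : Matrix (Fin m) (Fin m) ℝ) (b2 : Fin m → ℝ) (c : Fin m → ℝ)
    (hdecomp : T = ∑ a, V1 a * D a + ∑ b, V2 b * c b)
    (hstar : ∀ a, (∑ b, M a b * V1 b) - 4 * Real.pi * g a = u a) :
    T - ∑ a, (V1 a * D a + e a * g a)
      + 1 / (8 * Real.pi) * ((∑ a, ∑ b, (V1 a * M a b * e b + e a * M a b * V1 b))
          + ∑ x, ∑ y, (V2 x * A x y * b2 y + b2 x * A x y * V2 y))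
    = (∑ a, e a * u a) / (4 * Real.pi) := by
  subst hV2
  simp only [Pi.zero_apply, zero_mul, mul_zero, zero_add, add_zero,
    Finset.sum_const_zero] at hdecomp ⊢
  rw [hdecomp, Finset.sum_add_distrib, aux_sym_sum M hMsym V1 e]
  have hkey : 1 / (8 * Real.pi) * (∑ a, 2 * (e a * ∑ b, M a b * V1 b)) - ∑ a, e a * g a
      = (∑ a, e a * u a) / (4 * Real.pi) := by
    rw [Finset.mul_sum, Finset.sum_div, ← Finset.sum_sub_distrib]
    refine Finset.sum_congr rfl fun a _ => ?_
    have hs := hstar a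
    have hπ : Real.pi ≠ 0 := Real.pi_ne_zero
    field_simp
    linear_combination (8 * e a) * hs
  linear_combination hkey

lemma aux_alg2 {n m : ℕ} (T : ℝ) (e V1 D g : Fin n → ℝ) (V2 : Fin m → ℝ)
    (c : Fin m → ℝ) (j : Fin m) (hV2 : V2 = Pi.single j 1)
    (M : Matrix (Fin n) (Fin n) ℝ) (hMsym : M.IsSymm)
    (A : Matrix (Fin m) (Fin m) ℝ) (hAsym : A.IsSymm) (b2 : Fin m → ℝ)
    (hdecomp : T = ∑ a, V1 a * D a + ∑ b, V2 b * c b)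
    (hstar : ∀ a, (∑ b, M a b * V1 b) - 4 * Real.pi * g a = 0) :
    T - ∑ a, (V1 a * D a + e a * g a)
      + 1 / (8 * Real.pi) * ((∑ a, ∑ b, (V1 a * M a b * e b + e a * M a b * V1 b))
          + ∑ x, ∑ y, (V2 x * A x y * b2 y + b2 x * A x y * V2 y))
    = 1 / (4 * Real.pi) * (∑ l, A j l * b2 l) + c j := by
  subst hV2
  have hc : ∑ b, (Pi.single j 1 : Fin m → ℝ) b * c b = c j := by
    simp [Pi.single_apply]
  have hS2 : (∑ x, ∑ y, ((Pi.single j 1 : Fin m → ℝ) x * A x y * b2 y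
      + b2 x * A x y * (Pi.single j 1 : Fin m → ℝ) y)) = 2 * ∑ l, A j l * b2 l := by
    have hs2a : ∑ x, ∑ y, (Pi.single j 1 : Fin m → ℝ) x * A x y * b2 y
        = ∑ y, A j y * b2 y := by
      simp [Pi.single_apply, ite_mul, zero_mul, one_mul]
    have hs2b : ∑ x, ∑ y, b2 x * A x y * (Pi.single j 1 : Fin m → ℝ) y
        = ∑ x, b2 x * A x j := by
      simp [Pi.single_apply, mul_ite, mul_zero, mul_one]
    calc (∑ x, ∑ y, ((Pi.single j 1 : Fin m → ℝ) x * A x y * b2 y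
          + b2 x * A x y * (Pi.single j 1 : Fin m → ℝ) y))
        = (∑ x, ∑ y, (Pi.single j 1 : Fin m → ℝ) x * A x y * b2 y)
          + ∑ x, ∑ y, b2 x * A x y * (Pi.single j 1 : Fin m → ℝ) y := by
          rw [← Finset.sum_add_distrib]
          exact Finset.sum_congr rfl fun x _ => Finset.sum_add_distrib
      _ = (∑ y, A j y * b2 y) + ∑ x, b2 x * A x j := by rw [hs2a, hs2b]
      _ = 2 * ∑ l, A j l * b2 l := by
          rw [two_mul]
          congr 1
          exact Finset.sum_congr rfl fun x _ => by rw [hAsym.apply]; ring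
  have hzero : 1 / (8 * Real.pi) * (∑ a, 2 * (e a * ∑ b, M a b * V1 b))
      - ∑ a, e a * g a = 0 := by
    rw [Finset.mul_sum, ← Finset.sum_sub_distrib]
    refine Finset.sum_eq_zero fun a _ => ?_
    have hs := hstar a
    have hπ : Real.pi ≠ 0 := Real.pi_ne_zero
    field_simp
    linear_combination (2 * e a) * hs
  rw [hdecomp, hc, Finset.sum_add_distrib, aux_sym_sum M hMsym V1 e, hS2]
  linear_combination hzero

/-- If `Ψ`, differentiable on the open set `U`, inverts the change of
variables `Φ` (i.e. `Φ(Ψ(x)) = x` on `U`), then, writing `e = Ψ₁(d, β)`, the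
transformed Hamiltonian `H̄ = H ∘ Ψ` satisfies `∇_d H̄(d, β) = e/4π` and
`∇_β H̄(d, β) = (1/4π) M̃⁻¹ β + ∇_β K(e, β)`. -/
theorem gradients_of_transformed_discrete_hamiltonian
    {n m : ℕ} (K : (Fin n → ℝ) → (Fin m → ℝ) → ℝ)
    (hK : ContDiff ℝ 2 (fun p : (Fin n → ℝ) × (Fin m → ℝ) => K p.1 p.2))
    (M : Matrix (Fin n) (Fin n) ℝ) (Mt : Matrix (Fin m) (Fin m) ℝ)
    (hMsym : M.IsSymm) (hMtsym : Mt.IsSymm) (hM : IsUnit M) (hMt : IsUnit Mt)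
    (U : Set ((Fin n → ℝ) × (Fin m → ℝ))) (hU : IsOpen U)
    (Ψ : (Fin n → ℝ) × (Fin m → ℝ) → (Fin n → ℝ) × (Fin m → ℝ))
    (hΨdiff : ∀ x ∈ U, DifferentiableAt ℝ Ψ x)
    (hΦΨ : ∀ x ∈ U, Phidisc K M (Ψ x) = x) :
    ∀ (d : Fin n → ℝ) (β : Fin m → ℝ), (d, β) ∈ U →
      (∀ i, fderiv ℝ (fun d' => Hdisc K M Mt (Ψ (d', β)).1 (Ψ (d', β)).2) d
          (Pi.single i 1) = (Ψ (d, β)).1 i / (4 * Real.pi)) ∧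
      (∀ j, fderiv ℝ (fun β' => Hdisc K M Mt (Ψ (d, β')).1 (Ψ (d, β')).2) β
          (Pi.single j 1) =
        (1 / (4 * Real.pi)) * (∑ l, Mt⁻¹ j l * β l) +
          gradB K ((Ψ (d, β)).1) β j) := by
  intro d β hx
  have hFd : Differentiable ℝ (fun p : (Fin n → ℝ) × (Fin m → ℝ) => K p.1 p.2) :=
    hK.differentiable (by norm_num)
  have hDFc : ContDiff ℝ 1 (fderiv ℝ (fun p : (Fin n → ℝ) × (Fin m → ℝ) => K p.1 p.2)) :=
    hK.fderiv_right (by norm_num)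
  have hΨx : DifferentiableAt ℝ Ψ (d, β) := hΨdiff _ hx
  have hp2 : (Ψ (d, β)).2 = β := by
    have h : (Phidisc K M (Ψ (d, β))).2 = β := congrArg Prod.snd (hΦΨ (d, β) hx)
    exact h
  have hC1 : ∀ (j : Fin n) (q : (Fin n → ℝ) × (Fin m → ℝ)),
      HasFDerivAt (fun y : (Fin n → ℝ) × (Fin m → ℝ) => y.1 j)
        ((ContinuousLinearMap.proj j).comp (fst ℝ (Fin n → ℝ) (Fin m → ℝ))) q :=
    fun j q => ((ContinuousLinearMap.proj j (R := ℝ) (φ := fun _ : Fin n => ℝ)).comp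
      (fst ℝ (Fin n → ℝ) (Fin m → ℝ))).hasFDerivAt
  -- second component of the derivative of Ψ
  have hDsnd : ∀ v : (Fin n → ℝ) × (Fin m → ℝ), (fderiv ℝ Ψ (d, β) v).2 = v.2 := by
    have hev : (fun y => (Ψ y).2) =ᶠ[nhds (d, β)]
        (fun y : (Fin n → ℝ) × (Fin m → ℝ) => y.2) := by
      filter_upwards [hU.mem_nhds hx] with y hy
      have h : (Phidisc K M (Ψ y)).2 = y.2 := congrArg Prod.snd (hΦΨ y hy)
      exact h
    have h3 : HasFDerivAt (fun y => (Ψ y).2)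
        ((snd ℝ (Fin n → ℝ) (Fin m → ℝ)).comp (fderiv ℝ Ψ (d, β))) (d, β) :=
      (snd ℝ (Fin n → ℝ) (Fin m → ℝ)).hasFDerivAt.comp _ hΨx.hasFDerivAt
    have h5 : HasFDerivAt (fun y : (Fin n → ℝ) × (Fin m → ℝ) => y.2)
        (snd ℝ (Fin n → ℝ) (Fin m → ℝ)) (d, β) := hasFDerivAt_snd
    have key : (snd ℝ (Fin n → ℝ) (Fin m → ℝ)).comp (fderiv ℝ Ψ (d, β))
        = snd ℝ (Fin n → ℝ) (Fin m → ℝ) := by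
      rw [← h3.fderiv, hev.fderiv_eq, h5.fderiv]
    intro v
    have := congrArg (fun L : ((Fin n → ℝ) × (Fin m → ℝ)) →L[ℝ]
      (Fin m → ℝ) => L v) key
    simpa using this
  -- the key identity coming from differentiating Φ ∘ Ψ = id
  have hD2Ψ : HasFDerivAt (fderiv ℝ (fun p : (Fin n → ℝ) × (Fin m → ℝ) => K p.1 p.2))
      (fderiv ℝ (fderiv ℝ (fun p : (Fin n → ℝ) × (Fin m → ℝ) => K p.1 p.2)) (Ψ (d, β)))
      (Ψ (d, β)) := ((hDFc.differentiable one_ne_zero) _).hasFDerivAt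
  have hstar : ∀ (v : (Fin n → ℝ) × (Fin m → ℝ)) (i : Fin n),
      (∑ j, M i j * (fderiv ℝ Ψ (d, β) v).1 j)
        - 4 * Real.pi * (fderiv ℝ (fderiv ℝ (fun p : (Fin n → ℝ) × (Fin m → ℝ) => K p.1 p.2))
            (Ψ (d, β)) (fderiv ℝ Ψ (d, β) v) (Pi.single i 1, 0)) = v.1 i := by
    intro v i
    have hev : (fun y => (∑ j, M i j * (Ψ y).1 j)
          - 4 * Real.pi * fderiv ℝ (fun p : (Fin n → ℝ) × (Fin m → ℝ) => K p.1 p.2) (Ψ y)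
              (Pi.single i 1, 0))
        =ᶠ[nhds (d, β)] (fun y : (Fin n → ℝ) × (Fin m → ℝ) => y.1 i) := by
      filter_upwards [hU.mem_nhds hx] with y hy
      have h := congrFun (congrArg Prod.fst (hΦΨ y hy)) i
      simp only [Phidisc] at h
      rw [aux_gradE K (Ψ y) (hFd (Ψ y))] at h
      exact h
    have hL : HasFDerivAt (fun y => (∑ j, M i j * (Ψ y).1 j)
          - 4 * Real.pi * fderiv ℝ (fun p : (Fin n → ℝ) × (Fin m → ℝ) => K p.1 p.2) (Ψ y)
              (Pi.single i 1, 0))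
        ((∑ j, (M i j) • (((ContinuousLinearMap.proj j).comp
            (fst ℝ (Fin n → ℝ) (Fin m → ℝ))).comp (fderiv ℝ Ψ (d, β))))
         - (4 * Real.pi) • ((ContinuousLinearMap.apply ℝ ℝ ((Pi.single i 1 : Fin n → ℝ),
              (0 : Fin m → ℝ))).comp
            ((fderiv ℝ (fderiv ℝ (fun p : (Fin n → ℝ) × (Fin m → ℝ) => K p.1 p.2))
              (Ψ (d, β))).comp (fderiv ℝ Ψ (d, β))))) (d, β) :=
      (HasFDerivAt.fun_sum fun j (_ : j ∈ Finset.univ) =>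
        ((hC1 j (Ψ (d, β))).comp _ hΨx.hasFDerivAt).const_mul (M i j)).sub
        (((ContinuousLinearMap.apply ℝ ℝ ((Pi.single i 1 : Fin n → ℝ),
            (0 : Fin m → ℝ))).hasFDerivAt.comp _
          (hD2Ψ.comp _ hΨx.hasFDerivAt)).const_mul (4 * Real.pi))
    have hR : HasFDerivAt (fun y : (Fin n → ℝ) × (Fin m → ℝ) => y.1 i)
        ((ContinuousLinearMap.proj i).comp (fst ℝ (Fin n → ℝ) (Fin m → ℝ))) (d, β) :=
      hC1 i _
    have h4 := hL.fderiv
    rw [hev.fderiv_eq, hR.fderiv] at h4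
    have h6 := congrArg (fun L : ((Fin n → ℝ) × (Fin m → ℝ)) →L[ℝ] ℝ => L v) h4
    simp only [ContinuousLinearMap.coe_sub', Pi.sub_apply, ContinuousLinearMap.coe_smul',
      Pi.smul_apply, ContinuousLinearMap.coe_sum', Finset.sum_apply,
      ContinuousLinearMap.coe_comp', Function.comp_apply, ContinuousLinearMap.apply_apply,
      ContinuousLinearMap.proj_apply, ContinuousLinearMap.coe_fst', smul_eq_mul] at h6
    rw [← h6]
  obtain ⟨L, hL, hLv⟩ := aux_hasFDerivAt_Hdisc K hK M Mt (Ψ (d, β))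
  have hG : HasFDerivAt (fun y => Hdisc K M Mt (Ψ y).1 (Ψ y).2)
      (L.comp (fderiv ℝ Ψ (d, β))) (d, β) := hL.comp _ hΨx.hasFDerivAt
  constructor
  · intro i
    have hpart : HasFDerivAt (fun d' => Hdisc K M Mt (Ψ (d', β)).1 (Ψ (d', β)).2)
        ((L.comp (fderiv ℝ Ψ (d, β))).comp (inl ℝ (Fin n → ℝ) (Fin m → ℝ))) d :=
      hG.comp (f := fun d' => (d', β)) d (hasFDerivAt_prodMk_left d β)
    rw [hpart.fderiv]
    have hval : ((L.comp (fderiv ℝ Ψ (d, β))).comp (inl ℝ (Fin n → ℝ) (Fin m → ℝ)))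
        (Pi.single i 1)
        = L (fderiv ℝ Ψ (d, β) ((Pi.single i 1 : Fin n → ℝ), (0 : Fin m → ℝ))) := by
      simp
    rw [hval, hLv]
    have hfinal := aux_alg1
      (fderiv ℝ (fun p : (Fin n → ℝ) × (Fin m → ℝ) => K p.1 p.2) (Ψ (d, β))
        (fderiv ℝ Ψ (d, β) (Pi.single i 1, 0)))
      ((Ψ (d, β)).1) (Pi.single i 1)
      ((fderiv ℝ Ψ (d, β) (Pi.single i 1, 0)).1)
      (fun a => fderiv ℝ (fun p : (Fin n → ℝ) × (Fin m → ℝ) => K p.1 p.2) (Ψ (d, β))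
        (Pi.single a 1, 0))
      (fun a => fderiv ℝ (fderiv ℝ (fun p : (Fin n → ℝ) × (Fin m → ℝ) => K p.1 p.2)) (Ψ (d, β))
        (fderiv ℝ Ψ (d, β) (Pi.single i 1, 0)) (Pi.single a 1, 0))
      ((fderiv ℝ Ψ (d, β) (Pi.single i 1, 0)).2)
      (hDsnd (Pi.single i 1, 0))
      M hMsym Mt⁻¹ ((Ψ (d, β)).2)
      (fun b => fderiv ℝ (fun p : (Fin n → ℝ) × (Fin m → ℝ) => K p.1 p.2) (Ψ (d, β))
        (0, Pi.single b 1))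
      (aux_clm_decomp _ _)
      (fun a => hstar (Pi.single i 1, 0) a)
    refine hfinal.trans ?_
    rw [show (∑ a, (Ψ (d, β)).1 a * (Pi.single i 1 : Fin n → ℝ) a) = (Ψ (d, β)).1 i from by
      simp [Pi.single_apply]]
  · intro j
    have hpart : HasFDerivAt (fun β' => Hdisc K M Mt (Ψ (d, β')).1 (Ψ (d, β')).2)
        ((L.comp (fderiv ℝ Ψ (d, β))).comp (inr ℝ (Fin n → ℝ) (Fin m → ℝ))) β :=
      hG.comp (f := fun β' => (d, β')) β (hasFDerivAt_prodMk_right d β)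
    rw [hpart.fderiv]
    have hval : ((L.comp (fderiv ℝ Ψ (d, β))).comp (inr ℝ (Fin n → ℝ) (Fin m → ℝ)))
        (Pi.single j 1)
        = L (fderiv ℝ Ψ (d, β) ((0 : Fin n → ℝ), (Pi.single j 1 : Fin m → ℝ))) := by
      simp
    rw [hval, hLv]
    have hMtinv : (Mt⁻¹).IsSymm := by
      unfold Matrix.IsSymm
      rw [Matrix.transpose_nonsing_inv, hMtsym.eq]
    have hgB := aux_gradB K (Ψ (d, β)) (hFd _) j
    rw [hp2] at hgB
    have hfinal := aux_alg2
      (fderiv ℝ (fun p : (Fin n → ℝ) × (Fin m → ℝ) => K p.1 p.2) (Ψ (d, β))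
        (fderiv ℝ Ψ (d, β) (0, Pi.single j 1)))
      ((Ψ (d, β)).1)
      ((fderiv ℝ Ψ (d, β) (0, Pi.single j 1)).1)
      (fun a => fderiv ℝ (fun p : (Fin n → ℝ) × (Fin m → ℝ) => K p.1 p.2) (Ψ (d, β))
        (Pi.single a 1, 0))
      (fun a => fderiv ℝ (fderiv ℝ (fun p : (Fin n → ℝ) × (Fin m → ℝ) => K p.1 p.2)) (Ψ (d, β))
        (fderiv ℝ Ψ (d, β) (0, Pi.single j 1)) (Pi.single a 1, 0))
      ((fderiv ℝ Ψ (d, β) (0, Pi.single j 1)).2)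
      (fun b => fderiv ℝ (fun p : (Fin n → ℝ) × (Fin m → ℝ) => K p.1 p.2) (Ψ (d, β))
        (0, Pi.single b 1))
      j (hDsnd (0, Pi.single j 1))
      M hMsym Mt⁻¹ hMtinv ((Ψ (d, β)).2)
      (aux_clm_decomp _ _)
      (fun a => hstar (0, Pi.single j 1) a)
    refine hfinal.trans ?_
    rw [hp2, hgB]
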